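/- arXiv:1105.4266 — 2 statements merged into one kernel-verified Lean document; each statement's English description precedes it below -/
import Mathlib

section
/- The symbol A(ξ)(a,b) = (ξ·(a+b), ξ×b) of the magnetostatic operator satisfies Murat's constant-rank condition: rank A(ξ) = 3 for every ξ in the unit sphere of ℝ³. -/
open Matrix

/-- The symbol `A(ξ)(a,b) = (ξ·(a+b), ξ×b)` of the magnetostatic operator
`𝒜^mag(m,h) = (div(m+h), curl h)`, as a linear map `ℝ³ × ℝ³ → ℝ × ℝ³`. -/
noncomputable def magSymbol (ξ : Fin 3 → ℝ) :
    ((Fin 3 → ℝ) × (Fin 3 → ℝ)) →ₗ[ℝ] ℝ × (Fin 3 → ℝ) where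
  toFun p := (ξ ⬝ᵥ (p.1 + p.2), crossProduct ξ p.2)
  map_add' x y := by
    ext <;> simp [dotProduct_add] <;> ring
  map_smul' c x := by
    ext <;> simp [dotProduct_smul] <;> ring

/-- the magnetostatic symbol satisfies Murat's constant-rank condition:
`rank A(ξ) = 3` for every `ξ` in the unit sphere of `ℝ³`. -/
theorem magSymbol_constant_rank (ξ : Fin 3 → ℝ) (hξ : ξ ⬝ᵥ ξ = 1) :
    Module.finrank ℝ (LinearMap.range (magSymbol ξ)) = 3 := by
  set ψ : (ℝ × (Fin 3 → ℝ)) →ₗ[ℝ] ℝ :=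
    { toFun := fun p => ξ ⬝ᵥ p.2
      map_add' := fun x y => by simp [dotProduct_add]
      map_smul' := fun c x => by simp } with hψ
  have hrange : LinearMap.range (magSymbol ξ) = LinearMap.ker ψ := by
    ext p
    simp only [LinearMap.mem_range, LinearMap.mem_ker]
    constructor
    · rintro ⟨⟨a, b⟩, rfl⟩
      simp only [magSymbol, hψ, LinearMap.coe_mk, AddHom.coe_mk, LinearMap.mem_ker]
      exact dot_self_cross ξ b
    · intro hp
      refine ⟨((p.1 - ξ ⬝ᵥ (crossProduct p.2 ξ)) • ξ, crossProduct p.2 ξ), ?_⟩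
      have hp' : ξ 0 * p.2 0 + ξ 1 * p.2 1 + ξ 2 * p.2 2 = 0 := by
        simpa [dotProduct, Fin.sum_univ_three, hψ] using hp
      have hξ' : ξ 0 * ξ 0 + ξ 1 * ξ 1 + ξ 2 * ξ 2 = 1 := by
        simpa [dotProduct, Fin.sum_univ_three] using hξ
      have h1 : crossProduct ξ (crossProduct p.2 ξ) = p.2 := by
        ext i
        fin_cases i
        · simp [crossProduct, Fin.sum_univ_three]
          linear_combination p.2 0 * hξ' - ξ 0 * hp'
        · simp [crossProduct, Fin.sum_univ_three]
          linear_combination p.2 1 * hξ' - ξ 1 * hp'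
        · simp [crossProduct, Fin.sum_univ_three]
          linear_combination p.2 2 * hξ' - ξ 2 * hp'
      refine Prod.ext ?_ ?_
      · simp only [magSymbol, LinearMap.coe_mk, AddHom.coe_mk, dotProduct_add,
          dotProduct_smul, smul_eq_mul, hξ, mul_one]
        ring
      · simpa [magSymbol] using h1
  have hψsurj : Function.Surjective ψ := by
    intro c
    exact ⟨(0, c • ξ), by
      simp only [hψ, LinearMap.coe_mk, AddHom.coe_mk, dotProduct_smul, smul_eq_mul,
        hξ, mul_one]⟩
  have h1 : Module.finrank ℝ (LinearMap.range ψ) = 1 := by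
    rw [LinearMap.range_eq_top.2 hψsurj, finrank_top, Module.finrank_self]
  have h2 := LinearMap.finrank_range_add_finrank_ker ψ
  have hdom : Module.finrank ℝ (ℝ × (Fin 3 → ℝ)) = 4 := by
    simp [Module.finrank_prod]
  rw [hrange]
  omega
end

section
/- Fix ξ ∈ ℝ³ \ {0} with ξ₃ ≠ 0, and for ε > 0 set ξ_ε := (ξ₁, ξ₂, ξ₃/ε). Let P_ε ∈ Lin(ℝ⁶; ℝ⁶) be the orthogonal projection onto ker A(ξ_ε), where A(η)(a,b) = (η·(a+b), η×b) for (a,b) ∈ ℝ³×ℝ³. Then as ε → 0⁺, P_ε(a,b) converges for every (a,b) ∈ ℝ⁶ to P₀(a,b), the orthogonal projection of (a,b) onto the subspace {(a,b) ∈ ℝ³×ℝ³ : a₃ + b₃ = 0, b₁ = 0, b₂ = 0}. -/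
open Filter

/-- The magnetostatic symbol `A(η)(a,b) = (η·(a+b), η×b)` on `ℝ⁶ ≅ ℝ³ × ℝ³`
(coordinates `0,1,2` for `a`, `3,4,5` for `b`), with values in `ℝ⁴ ≅ ℝ × ℝ³`. -/
noncomputable def magSymbol6 (η : Fin 3 → ℝ) :
    EuclideanSpace ℝ (Fin 6) →ₗ[ℝ] (Fin 4 → ℝ) :=
  (Matrix.mulVecLin
    !![η 0, η 1, η 2, η 0, η 1, η 2;
       0, 0, 0, 0, -η 2, η 1;
       0, 0, 0, η 2, 0, -η 0;
       0, 0, 0, -η 1, η 0, 0]).comp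
    (WithLp.linearEquiv 2 ℝ (Fin 6 → ℝ)).toLinearMap

/-- The limiting subspace `{(a,b) : a₃ + b₃ = 0, b₁ = 0, b₂ = 0}` of `ℝ⁶ ≅ ℝ³ × ℝ³`. -/
noncomputable def magLimitSpace : Submodule ℝ (EuclideanSpace ℝ (Fin 6)) :=
  LinearMap.ker
    ((Matrix.mulVecLin
      !![(0:ℝ), 0, 1, 0, 0, 1;
         0, 0, 0, 1, 0, 0;
         0, 0, 0, 0, 1, 0] : (Fin 6 → ℝ) →ₗ[ℝ] (Fin 3 → ℝ)).comp
      (WithLp.linearEquiv 2 ℝ (Fin 6 → ℝ)).toLinearMap)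

instance (K : Submodule ℝ (EuclideanSpace ℝ (Fin 6))) : CompleteSpace K :=
  FiniteDimensional.complete ℝ K

lemma magMemKerIff (η : Fin 3 → ℝ) (x : EuclideanSpace ℝ (Fin 6)) :
    x ∈ LinearMap.ker (magSymbol6 η) ↔
      (η 0 * (x 0 + x 3) + η 1 * (x 1 + x 4) + η 2 * (x 2 + x 5) = 0 ∧
       η 1 * x 5 - η 2 * x 4 = 0 ∧ η 2 * x 3 - η 0 * x 5 = 0 ∧ η 0 * x 4 - η 1 * x 3 = 0) := by
  simp [magSymbol6, LinearMap.mem_ker, funext_iff, Fin.forall_fin_succ,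
    Matrix.mulVec, dotProduct, Fin.sum_univ_six,
    show (5:Fin 6) = (4:Fin 5).succ from rfl, Matrix.cons_val_succ]
  constructor
  · rintro ⟨h1, h2, h3, h4⟩
    refine ⟨by linarith, by linarith, by linarith, by linarith⟩
  · rintro ⟨h1, h2, h3, h4⟩
    refine ⟨by linarith, by linarith, by linarith, by linarith⟩

lemma magMemLimitIff (x : EuclideanSpace ℝ (Fin 6)) :
    x ∈ magLimitSpace ↔ (x 2 + x 5 = 0 ∧ x 3 = 0 ∧ x 4 = 0) := by
  simp [magLimitSpace, LinearMap.mem_ker, funext_iff, Fin.forall_fin_succ,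
    Matrix.mulVec, dotProduct, Fin.sum_univ_six,
    show (5:Fin 6) = (4:Fin 5).succ from rfl, Matrix.cons_val_succ]

noncomputable def magS (η : Fin 3 → ℝ) (v : EuclideanSpace ℝ (Fin 6)) : ℝ :=
  (η 0 * (v 0 + v 3) + η 1 * (v 1 + v 4) + η 2 * (v 2 + v 5)) /
    (2 * (η 0 ^ 2 + η 1 ^ 2 + η 2 ^ 2))

noncomputable def magT (η : Fin 3 → ℝ) (v : EuclideanSpace ℝ (Fin 6)) : ℝ :=
  (η 0 * (v 0 - v 3) + η 1 * (v 1 - v 4) + η 2 * (v 2 - v 5)) /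
    (2 * (η 0 ^ 2 + η 1 ^ 2 + η 2 ^ 2))

noncomputable def magW (η : Fin 3 → ℝ) (v : EuclideanSpace ℝ (Fin 6)) :
    EuclideanSpace ℝ (Fin 6) :=
  (EuclideanSpace.equiv (Fin 6) ℝ).symm
    ![v 0 - magS η v * η 0, v 1 - magS η v * η 1, v 2 - magS η v * η 2,
      -(magT η v * η 0), -(magT η v * η 1), -(magT η v * η 2)]

lemma magW_apply (η : Fin 3 → ℝ) (v : EuclideanSpace ℝ (Fin 6)) (i : Fin 6) :
    magW η v i =
      ![v 0 - magS η v * η 0, v 1 - magS η v * η 1, v 2 - magS η v * η 2,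
        -(magT η v * η 0), -(magT η v * η 1), -(magT η v * η 2)] i := rfl

lemma projKerEq (η : Fin 3 → ℝ) (hη : η 2 ≠ 0) (v : EuclideanSpace ℝ (Fin 6)) :
    (Submodule.orthogonalProjection (LinearMap.ker (magSymbol6 η)) v :
      EuclideanSpace ℝ (Fin 6)) = magW η v := by
  have hN : η 0 ^ 2 + η 1 ^ 2 + η 2 ^ 2 ≠ 0 := by positivity
  rw [← Submodule.starProjection_apply]
  apply Submodule.eq_starProjection_of_mem_of_inner_eq_zero
  · rw [magMemKerIff]
    simp only [magW_apply]
    simp only [Matrix.cons_val_zero, Matrix.cons_val_one, Matrix.head_cons,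
      Matrix.cons_val_two, Matrix.cons_val_three, Matrix.cons_val_four, Matrix.tail_cons,
      show (5:Fin 6) = (4:Fin 5).succ from rfl, Matrix.cons_val_succ]
    refine ⟨?_, by ring, by ring, by ring⟩
    simp only [magS, magT]
    field_simp
    ring
  · intro w hw
    rw [magMemKerIff] at hw
    obtain ⟨h1, h2, h3, h4⟩ := hw
    set μ := w 5 / η 2 with hμ
    have e3 : w 3 = η 0 * μ := by rw [hμ]; field_simp; linarith
    have e4 : w 4 = η 1 * μ := by rw [hμ]; field_simp; linarith
    have e5 : w 5 = η 2 * μ := by rw [hμ]; field_simp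
    have hst : (magS η v - magT η v) * (η 0 ^ 2 + η 1 ^ 2 + η 2 ^ 2) =
        η 0 * v 3 + η 1 * v 4 + η 2 * v 5 := by
      simp only [magS, magT]; field_simp; ring
    rw [e3, e4] at h1
    rw [e5] at h1
    simp only [PiLp.inner_apply, RCLike.inner_apply, starRingEnd_apply, star_trivial,
      Fin.sum_univ_six, PiLp.sub_apply]
    simp only [magW_apply]
    simp only [Matrix.cons_val_zero, Matrix.cons_val_one, Matrix.head_cons,
      Matrix.cons_val_two, Matrix.cons_val_three, Matrix.cons_val_four, Matrix.tail_cons,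
      show (5:Fin 6) = (4:Fin 5).succ from rfl, Matrix.cons_val_succ]
    rw [e3, e4, show (Fin.succ 4 : Fin 6) = 5 from rfl, e5]
    linear_combination magS η v * h1 - μ * hst

lemma projLimitEq (v : EuclideanSpace ℝ (Fin 6)) :
    (Submodule.orthogonalProjection magLimitSpace v : EuclideanSpace ℝ (Fin 6)) = magW ![0,0,1] v := by
  rw [← Submodule.starProjection_apply]
  apply Submodule.eq_starProjection_of_mem_of_inner_eq_zero
  · rw [magMemLimitIff]
    simp only [magW_apply]
    simp [magS, magT, Matrix.cons_val_zero, Matrix.cons_val_one, Matrix.head_cons,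
      show (5:Fin 6) = (4:Fin 5).succ from rfl, Matrix.cons_val_succ]
    ring
  · intro w hw
    rw [magMemLimitIff] at hw
    obtain ⟨h1, h2, h3⟩ := hw
    simp only [PiLp.inner_apply, RCLike.inner_apply, starRingEnd_apply, star_trivial,
      Fin.sum_univ_six, PiLp.sub_apply]
    simp only [magW_apply]
    simp [magS, magT, h2, h3, Matrix.cons_val_zero, Matrix.cons_val_one, Matrix.head_cons,
      show (5:Fin 6) = (4:Fin 5).succ from rfl, Matrix.cons_val_succ]
    linear_combination ((v 2 + v 5)/2) * h1

lemma magScaled (ξ0 ξ1 ξ2 ε a b c : ℝ) (hε : ε ≠ 0) (hξ2 : ξ2 ≠ 0) :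
    (ξ0 * a + ξ1 * b + ξ2 / ε * c) / (2 * (ξ0 ^ 2 + ξ1 ^ 2 + (ξ2 / ε) ^ 2)) =
      ε * (ε * (ξ0 * a + ξ1 * b) + ξ2 * c) / (2 * (ε ^ 2 * (ξ0 ^ 2 + ξ1 ^ 2) + ξ2 ^ 2)) := by
  have h1 : ξ2 / ε ≠ 0 := div_ne_zero hξ2 hε
  rw [div_eq_div_iff (by positivity) (by positivity)]
  field_simp

/-- for fixed `ξ ∈ ℝ³ \ {0}` with `ξ₃ ≠ 0` and `ξ_ε = (ξ₁, ξ₂, ξ₃/ε)`, the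
orthogonal projections onto `ker A(ξ_ε)` converge pointwise, as `ε → 0⁺`, to the orthogonal
projection onto `{(a,b) : a₃ + b₃ = 0, b₁ = b₂ = 0}`. -/
theorem magSymbol_projection_convergence (ξ : Fin 3 → ℝ) (hξ : ξ ≠ 0) (hξ3 : ξ 2 ≠ 0)
    (v : EuclideanSpace ℝ (Fin 6)) :
    Tendsto (fun ε : ℝ =>
        (Submodule.orthogonalProjection (LinearMap.ker (magSymbol6 ![ξ 0, ξ 1, ξ 2 / ε])) v :
          EuclideanSpace ℝ (Fin 6)))
      (nhdsWithin 0 (Set.Ioi (0 : ℝ)))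
      (nhds (Submodule.orthogonalProjection magLimitSpace v : EuclideanSpace ℝ (Fin 6))) := by
  set g : ℝ → EuclideanSpace ℝ (Fin 6) := fun ε =>
    (EuclideanSpace.equiv (Fin 6) ℝ).symm
      ![v 0 - ε * (ε * (ξ 0 * (v 0 + v 3) + ξ 1 * (v 1 + v 4)) + ξ 2 * (v 2 + v 5)) * ξ 0 / (2 * (ε ^ 2 * (ξ 0 ^ 2 + ξ 1 ^ 2) + ξ 2 ^ 2)), v 1 - ε * (ε * (ξ 0 * (v 0 + v 3) + ξ 1 * (v 1 + v 4)) + ξ 2 * (v 2 + v 5)) * ξ 1 / (2 * (ε ^ 2 * (ξ 0 ^ 2 + ξ 1 ^ 2) + ξ 2 ^ 2)), v 2 - (ε * (ξ 0 * (v 0 + v 3) + ξ 1 * (v 1 + v 4)) + ξ 2 * (v 2 + v 5)) * ξ 2 / (2 * (ε ^ 2 * (ξ 0 ^ 2 + ξ 1 ^ 2) + ξ 2 ^ 2)), -(ε * (ε * (ξ 0 * (v 0 - v 3) + ξ 1 * (v 1 - v 4)) + ξ 2 * (v 2 - v 5)) * ξ 0 / (2 * (ε ^ 2 * (ξ 0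 ^ 2 + ξ 1 ^ 2) + ξ 2 ^ 2))), -(ε * (ε * (ξ 0 * (v 0 - v 3) + ξ 1 * (v 1 - v 4)) + ξ 2 * (v 2 - v 5)) * ξ 1 / (2 * (ε ^ 2 * (ξ 0 ^ 2 + ξ 1 ^ 2) + ξ 2 ^ 2))), -((ε * (ξ 0 * (v 0 - v 3) + ξ 1 * (v 1 - v 4)) + ξ 2 * (v 2 - v 5)) * ξ 2 / (2 * (ε ^ 2 * (ξ 0 ^ 2 + ξ 1 ^ 2) + ξ 2 ^ 2)))] with hgdef
  have hEq : ∀ ε : ℝ, 0 < ε → magW ![ξ 0, ξ 1, ξ 2 / ε] v = g ε := by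
    intro ε hε
    have hεne : ε ≠ 0 := ne_of_gt hε
    have hDε : 2 * (ε ^ 2 * (ξ 0 ^ 2 + ξ 1 ^ 2) + ξ 2 ^ 2) ≠ 0 := by positivity
    have hS : magS ![ξ 0, ξ 1, ξ 2 / ε] v = ε * (ε * (ξ 0 * (v 0 + v 3) + ξ 1 * (v 1 + v 4)) + ξ 2 * (v 2 + v 5)) / (2 * (ε ^ 2 * (ξ 0 ^ 2 + ξ 1 ^ 2) + ξ 2 ^ 2)) := by
      simp only [magS, Matrix.cons_val_zero, Matrix.cons_val_one, Matrix.head_cons,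
        Matrix.cons_val_two, Matrix.tail_cons]
      exact magScaled _ _ _ _ _ _ _ hεne hξ3
    have hT : magT ![ξ 0, ξ 1, ξ 2 / ε] v = ε * (ε * (ξ 0 * (v 0 - v 3) + ξ 1 * (v 1 - v 4)) + ξ 2 * (v 2 - v 5)) / (2 * (ε ^ 2 * (ξ 0 ^ 2 + ξ 1 ^ 2) + ξ 2 ^ 2)) := by
      simp only [magT, Matrix.cons_val_zero, Matrix.cons_val_one, Matrix.head_cons,
        Matrix.cons_val_two, Matrix.tail_cons]
      exact magScaled _ _ _ _ _ _ _ hεne hξ3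
    ext i
    fin_cases i
    · show v 0 - magS ![ξ 0, ξ 1, ξ 2 / ε] v * ξ 0 =
        v 0 - ε * (ε * (ξ 0 * (v 0 + v 3) + ξ 1 * (v 1 + v 4)) + ξ 2 * (v 2 + v 5)) * ξ 0 / (2 * (ε ^ 2 * (ξ 0 ^ 2 + ξ 1 ^ 2) + ξ 2 ^ 2))
      rw [hS]; ring
    · show v 1 - magS ![ξ 0, ξ 1, ξ 2 / ε] v * ξ 1 =
        v 1 - ε * (ε * (ξ 0 * (v 0 + v 3) + ξ 1 * (v 1 + v 4)) + ξ 2 * (v 2 + v 5)) * ξ 1 / (2 * (ε ^ 2 * (ξ 0 ^ 2 + ξ 1 ^ 2) + ξ 2 ^ 2))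
      rw [hS]; ring
    · show v 2 - magS ![ξ 0, ξ 1, ξ 2 / ε] v * (ξ 2 / ε) =
        v 2 - (ε * (ξ 0 * (v 0 + v 3) + ξ 1 * (v 1 + v 4)) + ξ 2 * (v 2 + v 5)) * ξ 2 / (2 * (ε ^ 2 * (ξ 0 ^ 2 + ξ 1 ^ 2) + ξ 2 ^ 2))
      rw [hS]; field_simp
    · show -(magT ![ξ 0, ξ 1, ξ 2 / ε] v * ξ 0) =
        -(ε * (ε * (ξ 0 * (v 0 - v 3) + ξ 1 * (v 1 - v 4)) + ξ 2 * (v 2 - v 5)) * ξ 0 / (2 * (ε ^ 2 * (ξ 0 ^ 2 + ξ 1 ^ 2) + ξ 2 ^ 2)))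
      rw [hT]; ring
    · show -(magT ![ξ 0, ξ 1, ξ 2 / ε] v * ξ 1) =
        -(ε * (ε * (ξ 0 * (v 0 - v 3) + ξ 1 * (v 1 - v 4)) + ξ 2 * (v 2 - v 5)) * ξ 1 / (2 * (ε ^ 2 * (ξ 0 ^ 2 + ξ 1 ^ 2) + ξ 2 ^ 2)))
      rw [hT]; ring
    · show -(magT ![ξ 0, ξ 1, ξ 2 / ε] v * (ξ 2 / ε)) =
        -((ε * (ξ 0 * (v 0 - v 3) + ξ 1 * (v 1 - v 4)) + ξ 2 * (v 2 - v 5)) * ξ 2 / (2 * (ε ^ 2 * (ξ 0 ^ 2 + ξ 1 ^ 2) + ξ 2 ^ 2)))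
      rw [hT]; field_simp
  have hS0 : magS ![0, 0, 1] v = (v 2 + v 5) / 2 := by
    simp only [magS, Matrix.cons_val_zero, Matrix.cons_val_one, Matrix.head_cons,
      Matrix.cons_val_two, Matrix.tail_cons]
    norm_num
  have hT0 : magT ![0, 0, 1] v = (v 2 - v 5) / 2 := by
    simp only [magT, Matrix.cons_val_zero, Matrix.cons_val_one, Matrix.head_cons,
      Matrix.cons_val_two, Matrix.tail_cons]
    norm_num
  have hg0 : g 0 = magW ![0, 0, 1] v := by
    have hξ2sq : ξ 2 ^ 2 ≠ 0 := pow_ne_zero 2 hξ3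
    ext i
    fin_cases i
    · show (fun ε : ℝ => v 0 - ε * (ε * (ξ 0 * (v 0 + v 3) + ξ 1 * (v 1 + v 4)) + ξ 2 * (v 2 + v 5)) * ξ 0 / (2 * (ε ^ 2 * (ξ 0 ^ 2 + ξ 1 ^ 2) + ξ 2 ^ 2))) 0 =
        v 0 - magS ![0, 0, 1] v * 0
      rw [hS0]; ring
    · show (fun ε : ℝ => v 1 - ε * (ε * (ξ 0 * (v 0 + v 3) + ξ 1 * (v 1 + v 4)) + ξ 2 * (v 2 + v 5)) * ξ 1 / (2 * (ε ^ 2 * (ξ 0 ^ 2 + ξ 1 ^ 2) + ξ 2 ^ 2))) 0 =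
        v 1 - magS ![0, 0, 1] v * 0
      rw [hS0]; ring
    · show (fun ε : ℝ => v 2 - (ε * (ξ 0 * (v 0 + v 3) + ξ 1 * (v 1 + v 4)) + ξ 2 * (v 2 + v 5)) * ξ 2 / (2 * (ε ^ 2 * (ξ 0 ^ 2 + ξ 1 ^ 2) + ξ 2 ^ 2))) 0 =
        v 2 - magS ![0, 0, 1] v * 1
      rw [hS0]; simp; field_simp
    · show (fun ε : ℝ => -(ε * (ε * (ξ 0 * (v 0 - v 3) + ξ 1 * (v 1 - v 4)) + ξ 2 * (v 2 - v 5)) * ξ 0 / (2 * (ε ^ 2 * (ξ 0 ^ 2 + ξ 1 ^ 2) + ξ 2 ^ 2)))) 0 =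
        -(magT ![0, 0, 1] v * 0)
      rw [hT0]; ring
    · show (fun ε : ℝ => -(ε * (ε * (ξ 0 * (v 0 - v 3) + ξ 1 * (v 1 - v 4)) + ξ 2 * (v 2 - v 5)) * ξ 1 / (2 * (ε ^ 2 * (ξ 0 ^ 2 + ξ 1 ^ 2) + ξ 2 ^ 2)))) 0 =
        -(magT ![0, 0, 1] v * 0)
      rw [hT0]; ring
    · show (fun ε : ℝ => -((ε * (ξ 0 * (v 0 - v 3) + ξ 1 * (v 1 - v 4)) + ξ 2 * (v 2 - v 5)) * ξ 2 / (2 * (ε ^ 2 * (ξ 0 ^ 2 + ξ 1 ^ 2) + ξ 2 ^ 2)))) 0 =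
        -(magT ![0, 0, 1] v * 1)
      rw [hT0]; simp; field_simp
  have hD0 : 2 * ((0:ℝ) ^ 2 * (ξ 0 ^ 2 + ξ 1 ^ 2) + ξ 2 ^ 2) ≠ 0 := by positivity
  have hDC : Continuous fun ε : ℝ => (2 * (ε ^ 2 * (ξ 0 ^ 2 + ξ 1 ^ 2) + ξ 2 ^ 2)) := by fun_prop
  have hcont : ContinuousAt g 0 := by
    apply ContinuousAt.comp
    · exact ((EuclideanSpace.equiv (Fin 6) ℝ).symm :
        (Fin 6 → ℝ) ≃L[ℝ] EuclideanSpace ℝ (Fin 6)).continuous.continuousAt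
    · apply continuousAt_pi.2
      intro i
      fin_cases i
      · exact continuousAt_const.sub
          ((by fun_prop : Continuous fun ε : ℝ => ε * (ε * (ξ 0 * (v 0 + v 3) + ξ 1 * (v 1 + v 4)) + ξ 2 * (v 2 + v 5)) * ξ 0).continuousAt.div
            hDC.continuousAt hD0)
      · exact continuousAt_const.sub
          ((by fun_prop : Continuous fun ε : ℝ => ε * (ε * (ξ 0 * (v 0 + v 3) + ξ 1 * (v 1 + v 4)) + ξ 2 * (v 2 + v 5)) * ξ 1).continuousAt.div
            hDC.continuousAt hD0)
      · exact continuousAt_const.sub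
          ((by fun_prop : Continuous fun ε : ℝ => (ε * (ξ 0 * (v 0 + v 3) + ξ 1 * (v 1 + v 4)) + ξ 2 * (v 2 + v 5)) * ξ 2).continuousAt.div
            hDC.continuousAt hD0)
      · exact (((by fun_prop : Continuous fun ε : ℝ => ε * (ε * (ξ 0 * (v 0 - v 3) + ξ 1 * (v 1 - v 4)) + ξ 2 * (v 2 - v 5)) * ξ 0).continuousAt.div
            hDC.continuousAt hD0)).neg
      · exact (((by fun_prop : Continuous fun ε : ℝ => ε * (ε * (ξ 0 * (v 0 - v 3) + ξ 1 * (v 1 - v 4)) + ξ 2 * (v 2 - v 5)) * ξ 1).continuousAt.div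
            hDC.continuousAt hD0)).neg
      · exact (((by fun_prop : Continuous fun ε : ℝ => (ε * (ξ 0 * (v 0 - v 3) + ξ 1 * (v 1 - v 4)) + ξ 2 * (v 2 - v 5)) * ξ 2).continuousAt.div
            hDC.continuousAt hD0)).neg
  have htend : Tendsto g (nhdsWithin 0 (Set.Ioi (0:ℝ))) (nhds (g 0)) :=
    hcont.tendsto.mono_left nhdsWithin_le_nhds
  rw [projLimitEq v, ← hg0]
  apply Tendsto.congr' _ htend
  filter_upwards [self_mem_nhdsWithin] with ε hε
  have hε' : (0:ℝ) < ε := hε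
  rw [← hEq ε hε']
  rw [projKerEq]
  show (![ξ 0, ξ 1, ξ 2 / ε] : Fin 3 → ℝ) 2 ≠ 0
  simp only [Matrix.cons_val_two, Matrix.tail_cons, Matrix.head_cons]
  exact div_ne_zero hξ3 (ne_of_gt hε')
end
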